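/- (Bruna–Nagel–Wainger, Lemma 2.1) Let p(t) = Σ_{j=2}^M a_j t^j be a convex polynomial on [0, ∞) of one real variable with p(0) = p'(0) = 0. Then there exists a constant C_M > 0 depending only on M such that for all t ≥ 0, C_M Σ_{j=2}^M |a_j| t^j ≤ p(t) ≤ Σ_{j=2}^M |a_j| t^j. -/

import Mathlib

open Finset Matrix Filter Set

/-- Coefficients of a polynomial (in the monomial basis, degree < n) are bounded by a
constant (depending only on n) times the max of its values at 0, 1, ..., n-1. -/
lemma vand_coeff_bound (n : ℕ) : ∃ K : ℝ, 0 ≤ K ∧ ∀ (x : Fin n → ℝ) (B : ℝ),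
    (∀ i : Fin n, |∑ j : Fin n, x j * ((i : ℕ) : ℝ) ^ (j : ℕ)| ≤ B) →
    ∀ j : Fin n, |x j| ≤ K * B := by
  classical
  have hcinj : Function.Injective (fun i : Fin n => ((i : ℕ) : ℝ)) := by
    intro i j h
    exact Fin.ext (Nat.cast_injective h)
  have hdet : (Matrix.vandermonde (fun i : Fin n => ((i : ℕ) : ℝ))).det ≠ 0 :=
    Matrix.det_vandermonde_ne_zero_iff.mpr hcinj
  have hU : IsUnit (Matrix.vandermonde (fun i : Fin n => ((i : ℕ) : ℝ))).det :=
    isUnit_iff_ne_zero.mpr hdet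
  set V := Matrix.vandermonde (fun i : Fin n => ((i : ℕ) : ℝ)) with hVdef
  have hWV : V⁻¹ * V = 1 := Matrix.nonsing_inv_mul V hU
  refine ⟨∑ j : Fin n, ∑ i : Fin n, |V⁻¹ j i|,
    Finset.sum_nonneg fun _ _ => Finset.sum_nonneg fun _ _ => abs_nonneg _, ?_⟩
  intro x B hB j
  have hBpos : 0 ≤ B := le_trans (abs_nonneg _) (hB j)
  set v : Fin n → ℝ := fun i => ∑ j : Fin n, x j * ((i : ℕ) : ℝ) ^ (j : ℕ) with hvdef
  have hVx : V.mulVec x = v := by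
    funext i
    simp only [Matrix.mulVec, dotProduct, hVdef, Matrix.vandermonde_apply, hvdef]
    exact Finset.sum_congr rfl fun j _ => mul_comm _ _
  have hxW : x = V⁻¹.mulVec v := by
    rw [← hVx, Matrix.mulVec_mulVec, hWV, Matrix.one_mulVec]
  have hKj : (∑ i : Fin n, |V⁻¹ j i|) ≤ ∑ j : Fin n, ∑ i : Fin n, |V⁻¹ j i| :=
    Finset.single_le_sum (f := fun j => ∑ i : Fin n, |V⁻¹ j i|)
      (fun j _ => Finset.sum_nonneg fun i _ => abs_nonneg _) (Finset.mem_univ j)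
  calc |x j| = |∑ i : Fin n, V⁻¹ j i * v i| := by rw [hxW]; rfl
    _ ≤ ∑ i : Fin n, |V⁻¹ j i * v i| := Finset.abs_sum_le_sum_abs _ _
    _ ≤ ∑ i : Fin n, |V⁻¹ j i| * B := by
        refine Finset.sum_le_sum fun i _ => ?_
        rw [abs_mul]
        exact mul_le_mul_of_nonneg_left (hB i) (abs_nonneg _)
    _ = (∑ i : Fin n, |V⁻¹ j i|) * B := by rw [← Finset.sum_mul]
    _ ≤ (∑ j : Fin n, ∑ i : Fin n, |V⁻¹ j i|) * B :=
        mul_le_mul_of_nonneg_right hKj hBpos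

theorem stmt7 (M : ℕ) (hM : 2 ≤ M) :
    ∃ C : ℝ, 0 < C ∧
      ∀ a : ℕ → ℝ,
        ConvexOn ℝ (Set.Ici (0 : ℝ)) (fun t => ∑ j ∈ Finset.Icc 2 M, a j * t ^ j) →
        ∀ t : ℝ, 0 ≤ t →
          C * ∑ j ∈ Finset.Icc 2 M, |a j| * t ^ j
              ≤ ∑ j ∈ Finset.Icc 2 M, a j * t ^ j ∧
          ∑ j ∈ Finset.Icc 2 M, a j * t ^ j
              ≤ ∑ j ∈ Finset.Icc 2 M, |a j| * t ^ j := by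
  have hMR : (0:ℝ) < M := by positivity
  obtain ⟨K, hK0, hKprop⟩ := vand_coeff_bound (M + 1)
  set D : ℝ := ((M:ℝ)+1) * ((M:ℝ)^M * K) with hDdef
  have hD0 : 0 ≤ D := by positivity
  refine ⟨1 / (D + 1), by positivity, ?_⟩
  intro a hconv
  set p : ℝ → ℝ := fun t => ∑ j ∈ Finset.Icc 2 M, a j * t ^ j with hpdef
  have hp0 : p 0 = 0 := by
    apply Finset.sum_eq_zero
    intro j hj
    have hj2 : 2 ≤ j := (Finset.mem_Icc.mp hj).1
    have : j ≠ 0 := by omega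
    simp [this]
  -- p is nonnegative on [0, ∞)
  have hnonneg : ∀ s : ℝ, 0 ≤ s → 0 ≤ p s := by
    intro s hs
    rcases eq_or_lt_of_le hs with rfl | hs
    · exact hp0.ge
    have hq0 : (∑ j ∈ Finset.Icc 2 M, a j * (0:ℝ) ^ (j-1)) = 0 := by
      apply Finset.sum_eq_zero
      intro j hj
      have hj2 : 2 ≤ j := (Finset.mem_Icc.mp hj).1
      have : j - 1 ≠ 0 := by omega
      simp [this]
    have hqc : Filter.Tendsto (fun u : ℝ => ∑ j ∈ Finset.Icc 2 M, a j * u ^ (j-1))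
        (nhdsWithin 0 (Set.Ioi 0)) (nhds 0) := by
      have hcont : Continuous (fun u : ℝ => ∑ j ∈ Finset.Icc 2 M, a j * u ^ (j-1)) := by
        apply continuous_finset_sum
        intro j _
        exact (continuous_const.mul (continuous_pow _))
      have := hcont.tendsto 0
      rw [hq0] at this
      exact this.mono_left nhdsWithin_le_nhds
    have htend : Filter.Tendsto (fun u : ℝ => p u / u)
        (nhdsWithin 0 (Set.Ioi 0)) (nhds 0) := by
      apply hqc.congr'
      filter_upwards [self_mem_nhdsWithin] with u hu
      have hu0 : u ≠ 0 := ne_of_gt hu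
      rw [hpdef]
      simp only
      rw [Finset.sum_div]
      apply Finset.sum_congr rfl
      intro j hj
      have hj2 : 2 ≤ j := (Finset.mem_Icc.mp hj).1
      have hje : j - 1 + 1 = j := by omega
      rw [← hje, pow_succ]
      field_simp
      ring_nf
      simp only [Nat.add_sub_cancel_left]
    have hev : ∀ᶠ u in nhdsWithin 0 (Set.Ioi 0), p u / u ≤ p s / s := by
      filter_upwards [Ioo_mem_nhdsGT_of_mem ⟨le_refl (0:ℝ), hs⟩] with u hu
      have h := hconv.secant_mono (a := 0) (x := u) (y := s)
        (Set.self_mem_Ici) (Set.mem_Ici.mpr (le_of_lt hu.1))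
        (Set.mem_Ici.mpr (le_of_lt hs)) (ne_of_gt hu.1) (ne_of_gt hs)
        (le_of_lt hu.2)
      simpa [hp0, sub_zero] using h
    have hd : (0:ℝ) ≤ p s / s := le_of_tendsto htend hev
    have := (le_div_iff₀ hs).mp hd
    linarith
  -- p is monotone on [0, ∞)
  have hmono : ∀ s t : ℝ, 0 ≤ s → s ≤ t → p s ≤ p t := by
    intro s t hs hst
    rcases eq_or_lt_of_le hst with rfl | hst
    · exact le_refl _
    rcases eq_or_lt_of_le hs with rfl | hs
    · rw [hp0]; exact hnonneg t (le_of_lt hst)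
    have ht : (0:ℝ) < t := lt_trans hs hst
    have h := hconv.secant_mono (a := 0) (x := s) (y := t)
      (Set.self_mem_Ici) (Set.mem_Ici.mpr (le_of_lt hs))
      (Set.mem_Ici.mpr (le_of_lt ht)) (ne_of_gt hs) (ne_of_gt ht)
      (le_of_lt hst)
    simp only [hp0, sub_zero] at h
    have h2 := (div_le_div_iff₀ hs ht).mp h
    have h3 : 0 ≤ p t := hnonneg t (le_of_lt ht)
    nlinarith
  intro t ht
  -- upper bound is easy
  have hupper : p t ≤ ∑ j ∈ Finset.Icc 2 M, |a j| * t ^ j := by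
    apply Finset.sum_le_sum
    intro j _
    exact mul_le_mul_of_nonneg_right (le_abs_self _) (pow_nonneg ht j)
  rcases eq_or_lt_of_le ht with rfl | ht
  · constructor
    · have h1 : (∑ j ∈ Finset.Icc 2 M, |a j| * (0:ℝ) ^ j) = 0 := by
        apply Finset.sum_eq_zero
        intro j hj
        have hj2 : 2 ≤ j := (Finset.mem_Icc.mp hj).1
        have : j ≠ 0 := by omega
        simp [this]
      rw [h1, mul_zero]
      exact hp0.ge
    · exact hupper
  -- main lower bound via Vandermonde inversion
  have hpt0 : 0 ≤ p t := hnonneg t (le_of_lt ht)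
  set b : Fin (M+1) → ℝ := fun j => if 2 ≤ (j:ℕ) then a j else 0 with hbdef
  have hsum : ∀ s : ℝ, (∑ j : Fin (M+1), b j * s ^ (j:ℕ)) = p s := by
    intro s
    rw [hpdef]
    simp only
    rw [Fin.sum_univ_eq_sum_range (fun j => (if 2 ≤ j then a j else 0) * s ^ j) (M+1)]
    have hIcc : Finset.Icc 2 M = (Finset.range (M+1)).filter (fun j => 2 ≤ j) := by
      ext j
      simp only [Finset.mem_Icc, Finset.mem_filter, Finset.mem_range]
      omega
    rw [hIcc, Finset.sum_filter]
    apply Finset.sum_congr rfl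
    intro j _
    split <;> simp
  set x : Fin (M+1) → ℝ := fun j => b j * (t/M) ^ (j:ℕ) with hxdef
  have hvals : ∀ i : Fin (M+1),
      |∑ j : Fin (M+1), x j * ((i : ℕ) : ℝ) ^ (j:ℕ)| ≤ p t := by
    intro i
    have hval : (∑ j : Fin (M+1), x j * ((i : ℕ) : ℝ) ^ (j:ℕ))
        = p (((i:ℕ):ℝ) * (t/M)) := by
      rw [← hsum (((i:ℕ):ℝ) * (t/M))]
      apply Finset.sum_congr rfl
      intro j _
      rw [hxdef]
      simp only
      rw [mul_pow]
      ring
    rw [hval]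
    have hi0 : (0:ℝ) ≤ ((i:ℕ):ℝ) * (t/M) := by positivity
    have hi1 : ((i:ℕ):ℝ) * (t/M) ≤ t := by
      have hiM : ((i:ℕ):ℝ) ≤ M := by exact_mod_cast Fin.is_le i
      rw [mul_div_assoc', div_le_iff₀ hMR]
      nlinarith
    rw [abs_of_nonneg (hnonneg _ hi0)]
    exact hmono _ _ hi0 hi1
  have hxb := hKprop x (p t) hvals
  -- bound each term |a j| * t^j
  have hterm : ∀ j ∈ Finset.Icc 2 M, |a j| * t ^ j ≤ (M:ℝ)^M * K * p t := by
    intro j hj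
    obtain ⟨hj2, hjM⟩ := Finset.mem_Icc.mp hj
    have hxj : x ⟨j, by omega⟩ = a j * (t/M) ^ j := by
      rw [hxdef, hbdef]
      simp only
      rw [if_pos hj2]
    have h1 : |a j| * (t/M) ^ j ≤ K * p t := by
      have := hxb ⟨j, by omega⟩
      rw [hxj, abs_mul, abs_of_nonneg (by positivity : (0:ℝ) ≤ (t/M)^j)] at this
      exact this
    have hMj : (M:ℝ) ^ j ≤ (M:ℝ) ^ M :=
      pow_le_pow_right₀ (by exact_mod_cast Nat.one_le_of_lt hM) hjM
    have heq : |a j| * t ^ j = (|a j| * (t/M) ^ j) * (M:ℝ) ^ j := by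
      rw [div_pow]
      field_simp
    rw [heq]
    calc (|a j| * (t/M) ^ j) * (M:ℝ) ^ j ≤ (K * p t) * (M:ℝ) ^ j :=
          mul_le_mul_of_nonneg_right h1 (by positivity)
      _ ≤ (K * p t) * (M:ℝ) ^ M := mul_le_mul_of_nonneg_left hMj (by positivity)
      _ = (M:ℝ)^M * K * p t := by ring
  have hcard : ((Finset.Icc 2 M).card : ℝ) ≤ (M:ℝ) + 1 := by
    rw [Nat.card_Icc]
    have : M + 1 - 2 ≤ M + 1 := by omega
    exact_mod_cast this
  have hsumabs : (∑ j ∈ Finset.Icc 2 M, |a j| * t ^ j) ≤ D * p t := by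
    calc (∑ j ∈ Finset.Icc 2 M, |a j| * t ^ j)
        ≤ ∑ _j ∈ Finset.Icc 2 M, (M:ℝ)^M * K * p t := Finset.sum_le_sum hterm
      _ = ((Finset.Icc 2 M).card : ℝ) * ((M:ℝ)^M * K * p t) := by
          rw [Finset.sum_const, nsmul_eq_mul]
      _ ≤ ((M:ℝ)+1) * ((M:ℝ)^M * K * p t) :=
          mul_le_mul_of_nonneg_right hcard (by positivity)
      _ = D * p t := by rw [hDdef]; ring
  constructor
  · have hC1 : (1:ℝ) / (D + 1) * D ≤ 1 := by
      rw [div_mul_eq_mul_div, div_le_one (by linarith)]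
      linarith
    calc 1 / (D + 1) * ∑ j ∈ Finset.Icc 2 M, |a j| * t ^ j
        ≤ 1 / (D + 1) * (D * p t) := by
          apply mul_le_mul_of_nonneg_left hsumabs (by positivity)
      _ = (1 / (D + 1) * D) * p t := by ring
      _ ≤ 1 * p t := mul_le_mul_of_nonneg_right hC1 hpt0
      _ = p t := one_mul _
  · exact hupper
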